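/- Let S₁ ⊆ A₁ and S₂ ⊆ A₂ be local operator systems in unital locally C*-algebras with defining seminorm families indexed by the same set Λ. A linear map φ : S₁ → S₂ is an admissible local completely positive map if and only if there exists an inverse system (φ_λ)_λ of completely positive maps φ_λ : (S₁)_λ → (S₂)_λ with φ = lim← φ_λ (i.e., φ_λ ∘ π^{A₁}_λ|_{S₁} = π^{A₂}_λ ∘ φ for all λ). -/

import Mathlib

open scoped ComplexOrder

/-- A C*-seminorm on a complex *-algebra. -/
structure IsCstarSeminorm {A : Type*} [Ring A] [StarRing A] [Algebra ℂ A] (p : A → ℝ) : Prop where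
  nonneg : ∀ a, 0 ≤ p a
  map_zero' : p 0 = 0
  add_le : ∀ a b, p (a + b) ≤ p a + p b
  smul : ∀ (c : ℂ) (a : A), p (c • a) = ‖c‖ * p a
  mul_le : ∀ a b, p (a * b) ≤ p a * p b
  star_eq : ∀ a, p (star a) = p a
  cstar : ∀ a, p (star a * a) = p a ^ 2

/-- The family of canonical C*-seminorms on the matrix algebras `Mₙ(A)` induced by a
C*-seminorm `p` on `A`. -/
structure IsMatrixCstarSeminormFamily {A : Type*} [Ring A] [StarRing A] [Algebra ℂ A]
    (p : A → ℝ) (pn : ∀ n : ℕ, Matrix (Fin n) (Fin n) A → ℝ) : Prop where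
  cstar : ∀ n, IsCstarSeminorm (pn n)
  ker : ∀ n (M : Matrix (Fin n) (Fin n) A), pn n M = 0 ↔ ∀ i j, p (M i j) = 0
  one : ∀ a : A, pn 1 (fun _ _ => a) = p a

/-- `λ`-positivity of a matrix over `A` relative to the matrix seminorm `pn` (at level `λ`):
`M = b*b + c` with `pn c = 0`. -/
def LamPos {A : Type*} [Ring A] [StarRing A]
    (pn : ∀ n : ℕ, Matrix (Fin n) (Fin n) A → ℝ) (n : ℕ)
    (M : Matrix (Fin n) (Fin n) A) : Prop :=
  ∃ x c : Matrix (Fin n) (Fin n) A, pn n c = 0 ∧ M = star x * x + c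

/-- Positivity of a matrix of bounded operators, i.e. positivity in `B(H^{⊕n}) ≅ Mₙ(B(H))`. -/
def MatPosOp {H : Type*} [NormedAddCommGroup H] [InnerProductSpace ℂ H] [CompleteSpace H]
    {n : ℕ} (T : Matrix (Fin n) (Fin n) (H →L[ℂ] H)) : Prop :=
  ∃ X : Matrix (Fin n) (Fin n) (H →L[ℂ] H), T = star X * X

/-- The bounded operator on `H^{⊕n}` (with the `ℓ²`-Hilbert space structure) induced by an
`n × n` matrix of bounded operators on `H`. -/
noncomputable def matOp {H : Type*} [NormedAddCommGroup H] [InnerProductSpace ℂ H]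
    {n : ℕ} (T : Matrix (Fin n) (Fin n) (H →L[ℂ] H)) :
    PiLp 2 (fun _ : Fin n => H) →L[ℂ] PiLp 2 (fun _ : Fin n => H) :=
  ((PiLp.continuousLinearEquiv 2 ℂ (fun _ : Fin n => H)).symm :
      ((_ : Fin n) → H) →L[ℂ] PiLp 2 (fun _ : Fin n => H)) ∘L
    (ContinuousLinearMap.pi fun i => ∑ j, (T i j) ∘L (ContinuousLinearMap.proj j)) ∘L
    ((PiLp.continuousLinearEquiv 2 ℂ (fun _ : Fin n => H)) :
      PiLp 2 (fun _ : Fin n => H) →L[ℂ] ((_ : Fin n) → H))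

/-- A map into `B(H)` has trivial commutant (irreducibility). -/
def HasTrivialCommutant {R H : Type*} [NormedAddCommGroup H] [InnerProductSpace ℂ H]
    (φ : R → (H →L[ℂ] H)) : Prop :=
  ∀ T : H →L[ℂ] H, (∀ a, T * φ a = φ a * T) → ∃ c : ℂ, T = c • (1 : H →L[ℂ] H)

/-- Complete positivity at level `λ` for a linear map defined on all of `A`, with values in
`B(H)`: `λ`-positive matrices go to positive operator matrices, and matrices annihilated by the
`λ`-th matrix seminorm go to zero. -/
def IsLamCPmap {A H : Type*} [Ring A] [StarRing A] [Algebra ℂ A]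
    [NormedAddCommGroup H] [InnerProductSpace ℂ H] [CompleteSpace H]
    (pn : ∀ n : ℕ, Matrix (Fin n) (Fin n) A → ℝ) (φ : A →ₗ[ℂ] (H →L[ℂ] H)) : Prop :=
  (∀ (n : ℕ) (M : Matrix (Fin n) (Fin n) A), LamPos pn n M → MatPosOp (M.map φ)) ∧
  (∀ (n : ℕ) (M : Matrix (Fin n) (Fin n) A), pn n M = 0 → M.map φ = 0)

/-- Complete positivity at level `λ` for a linear map defined on a local operator system
`S ⊆ A`, with values in `B(H)`. -/
def IsLamCPmapOn {A H : Type*} [Ring A] [StarRing A] [Algebra ℂ A]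
    [NormedAddCommGroup H] [InnerProductSpace ℂ H] [CompleteSpace H]
    (pn : ∀ n : ℕ, Matrix (Fin n) (Fin n) A → ℝ) (S : Submodule ℂ A)
    (φ : ↥S →ₗ[ℂ] (H →L[ℂ] H)) : Prop :=
  (∀ (n : ℕ) (M : Matrix (Fin n) (Fin n) ↥S), LamPos pn n (M.map Subtype.val) →
      MatPosOp (M.map fun s => φ s)) ∧
  (∀ (n : ℕ) (M : Matrix (Fin n) (Fin n) ↥S), pn n (M.map Subtype.val) = 0 →
      M.map (fun s => φ s) = 0)

/-- Complete positivity (in the C*-algebraic, purely algebraic sense) of a linear map from a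
ring with involution to `B(H)`: matrices of the form `x*x` are sent to positive operator
matrices. For a C*-algebra this is the usual notion of complete positivity. -/
def IsCstarCPmap {R H : Type*} [Ring R] [StarRing R] [Algebra ℂ R]
    [NormedAddCommGroup H] [InnerProductSpace ℂ H] [CompleteSpace H]
    (φ : R →ₗ[ℂ] (H →L[ℂ] H)) : Prop :=
  ∀ (n : ℕ) (M : Matrix (Fin n) (Fin n) R),
    (∃ x : Matrix (Fin n) (Fin n) R, M = star x * x) → MatPosOp (M.map φ)

/-- A boundary representation (in the sense of Arveson) of a C*-algebra `R` for the operator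
system `T ⊆ R`: an irreducible representation which is the unique unital completely positive
extension of its restriction to `T`. -/
def IsBoundaryRep {R H : Type*} [Ring R] [StarRing R] [Algebra ℂ R]
    [NormedAddCommGroup H] [InnerProductSpace ℂ H] [CompleteSpace H]
    (T : Set R) (ψ : R →⋆ₐ[ℂ] (H →L[ℂ] H)) : Prop :=
  HasTrivialCommutant ⇑ψ ∧
  ∀ χ : R →ₗ[ℂ] (H →L[ℂ] H), χ 1 = 1 → IsCstarCPmap χ → (∀ t ∈ T, χ t = ψ t) →
    ∀ b, χ b = ψ b

/-- An admissible local boundary representation of the locally C*-algebra `A` for the local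
operator system `S ⊆ A`. -/
def IsAdmLocBdryRep {Λ A H : Type*} [Ring A] [StarRing A] [Algebra ℂ A]
    [NormedAddCommGroup H] [InnerProductSpace ℂ H] [CompleteSpace H]
    (p : Λ → A → ℝ) (pn : Λ → ∀ n : ℕ, Matrix (Fin n) (Fin n) A → ℝ)
    (S : Submodule ℂ A) (π : A →⋆ₐ[ℂ] (H →L[ℂ] H)) : Prop :=
  HasTrivialCommutant ⇑π ∧
  ∃ l₀ : Λ, (∀ a, ‖π a‖ ≤ p l₀ a) ∧
    ∀ φ : A →ₗ[ℂ] (H →L[ℂ] H), φ 1 = 1 → (∃ l, IsLamCPmap (pn l) φ) →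
      (∀ a, ‖φ a‖ ≤ p l₀ a) → (∀ s ∈ S, φ s = π s) → ∀ a, φ a = π a

/-- An admissible local completely positive map between local operator systems
`S₁ ⊆ A₁` and `S₂ ⊆ A₂` (same index set `Λ` of seminorms). -/
def IsAdmLocCP {Λ A₁ A₂ : Type*} [Ring A₁] [StarRing A₁] [Algebra ℂ A₁]
    [Ring A₂] [StarRing A₂] [Algebra ℂ A₂]
    (pn₁ : Λ → ∀ n : ℕ, Matrix (Fin n) (Fin n) A₁ → ℝ)
    (pn₂ : Λ → ∀ n : ℕ, Matrix (Fin n) (Fin n) A₂ → ℝ)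
    (S₁ : Submodule ℂ A₁) (S₂ : Submodule ℂ A₂) (φ : ↥S₁ →ₗ[ℂ] ↥S₂) : Prop :=
  ∀ (l : Λ) (n : ℕ) (M : Matrix (Fin n) (Fin n) ↥S₁),
    (LamPos (pn₁ l) n (M.map Subtype.val) →
      LamPos (pn₂ l) n (M.map fun s => ((φ s : ↥S₂) : A₂))) ∧
    (pn₁ l n (M.map Subtype.val) = 0 → pn₂ l n (M.map fun s => ((φ s : ↥S₂) : A₂)) = 0)

/-- A local completely isometric map between local operator systems. -/
def IsLocCompIsometric {Λ A₁ A₂ : Type*} [Ring A₁] [StarRing A₁] [Algebra ℂ A₁]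
    [Ring A₂] [StarRing A₂] [Algebra ℂ A₂]
    (pn₁ : Λ → ∀ n : ℕ, Matrix (Fin n) (Fin n) A₁ → ℝ)
    (pn₂ : Λ → ∀ n : ℕ, Matrix (Fin n) (Fin n) A₂ → ℝ)
    (S₁ : Submodule ℂ A₁) (S₂ : Submodule ℂ A₂) (φ : ↥S₁ →ₗ[ℂ] ↥S₂) : Prop :=
  ∀ (l : Λ) (n : ℕ) (M : Matrix (Fin n) (Fin n) ↥S₁),
    pn₂ l n (M.map fun s => ((φ s : ↥S₂) : A₂)) = pn₁ l n (M.map Subtype.val)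

/-- A completely positive map (algebraic sense) between operator systems `T₁ ⊆ R₁`, `T₂ ⊆ R₂`
sitting in C*-algebras. -/
def IsCstarCPmapOn {R₁ R₂ : Type*} [Ring R₁] [StarRing R₁] [Algebra ℂ R₁]
    [Ring R₂] [StarRing R₂] [Algebra ℂ R₂]
    (T₁ : Submodule ℂ R₁) (T₂ : Submodule ℂ R₂) (ψ : ↥T₁ →ₗ[ℂ] ↥T₂) : Prop :=
  ∀ (n : ℕ) (M : Matrix (Fin n) (Fin n) ↥T₁),
    (∃ x : Matrix (Fin n) (Fin n) R₁, M.map Subtype.val = star x * x) →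
    ∃ y : Matrix (Fin n) (Fin n) R₂, M.map (fun s => ((ψ s : ↥T₂) : R₂)) = star y * y

/-- A local boundary ideal for a local operator system `S ⊆ A`: a closed two-sided *-ideal such
that the quotient map is completely isometric on `S` with respect to the quotient matrix
seminorms. -/
def IsLocBdryIdeal {Λ A : Type*} [Ring A] [StarRing A] [Algebra ℂ A] [TopologicalSpace A]
    (pn : Λ → ∀ n : ℕ, Matrix (Fin n) (Fin n) A → ℝ) (S : Submodule ℂ A)
    (I : Set A) : Prop :=
  (∃ J : TwoSidedIdeal A, (J : Set A) = I) ∧ (∀ a ∈ I, star a ∈ I) ∧ IsClosed I ∧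
  ∀ (l : Λ) (n : ℕ) (M : Matrix (Fin n) (Fin n) ↥S),
    sInf {r : ℝ | ∃ C : Matrix (Fin n) (Fin n) A, (∀ i j, C i j ∈ I) ∧
        r = pn l n (M.map Subtype.val + C)} = pn l n (M.map Subtype.val)



private lemma mapStarMulAux {R S : Type*} [Ring R] [StarRing R] [Algebra ℂ R]
    [Ring S] [StarRing S] [Algebra ℂ S] {n : ℕ} (f : R →⋆ₐ[ℂ] S)
    (x : Matrix (Fin n) (Fin n) R) (i j : Fin n) :
    f ((star x * x) i j) = (star (x.map f) * x.map f) i j := by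
  simp [Matrix.mul_apply, Matrix.star_apply, Matrix.map_apply, map_sum, map_mul, map_star]

set_option synthInstance.maxHeartbeats 1000000 in
/-- `φ : S₁ → S₂` is an admissible local completely positive map iff it is the
inverse limit of an inverse system of completely positive maps `φ_λ : (S₁)_λ → (S₂)_λ`. -/
theorem stmt7 {Λ : Type*} [Preorder Λ] {A₁ : Type*} [Ring A₁] [StarRing A₁] [Algebra ℂ A₁]
    {A₂ : Type*} [Ring A₂] [StarRing A₂] [Algebra ℂ A₂]
    {B₁ : Λ → Type*} [∀ l, NormedRing (B₁ l)] [∀ l, StarRing (B₁ l)] [∀ l, CStarRing (B₁ l)]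
    [∀ l, NormedAlgebra ℂ (B₁ l)] [∀ l, StarModule ℂ (B₁ l)] [∀ l, CompleteSpace (B₁ l)]
    {B₂ : Λ → Type*} [∀ l, NormedRing (B₂ l)] [∀ l, StarRing (B₂ l)] [∀ l, CStarRing (B₂ l)]
    [∀ l, NormedAlgebra ℂ (B₂ l)] [∀ l, StarModule ℂ (B₂ l)] [∀ l, CompleteSpace (B₂ l)]
    (p₁ : Λ → A₁ → ℝ) (hp₁ : ∀ l, IsCstarSeminorm (p₁ l))
    (hmono₁ : ∀ ⦃l₁ l₂ : Λ⦄, l₁ ≤ l₂ → ∀ a, p₁ l₁ a ≤ p₁ l₂ a)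
    (p₂ : Λ → A₂ → ℝ) (hp₂ : ∀ l, IsCstarSeminorm (p₂ l))
    (hmono₂ : ∀ ⦃l₁ l₂ : Λ⦄, l₁ ≤ l₂ → ∀ a, p₂ l₁ a ≤ p₂ l₂ a)
    (π₁ : ∀ l, A₁ →⋆ₐ[ℂ] B₁ l) (hsurj₁ : ∀ l, Function.Surjective ⇑(π₁ l))
    (hnorm₁ : ∀ l a, ‖(π₁ l) a‖ = p₁ l a)
    (π₂ : ∀ l, A₂ →⋆ₐ[ℂ] B₂ l) (hsurj₂ : ∀ l, Function.Surjective ⇑(π₂ l))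
    (hnorm₂ : ∀ l a, ‖(π₂ l) a‖ = p₂ l a)
    (pn₁ : Λ → ∀ n : ℕ, Matrix (Fin n) (Fin n) A₁ → ℝ)
    (hpn₁ : ∀ l, IsMatrixCstarSeminormFamily (p₁ l) (pn₁ l))
    (pn₂ : Λ → ∀ n : ℕ, Matrix (Fin n) (Fin n) A₂ → ℝ)
    (hpn₂ : ∀ l, IsMatrixCstarSeminormFamily (p₂ l) (pn₂ l))
    (S₁ : Submodule ℂ A₁) (hS₁star : ∀ s ∈ S₁, star s ∈ S₁) (hS₁one : (1 : A₁) ∈ S₁)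
    (S₂ : Submodule ℂ A₂) (hS₂star : ∀ s ∈ S₂, star s ∈ S₂) (hS₂one : (1 : A₂) ∈ S₂)
    (φ : ↥S₁ →ₗ[ℂ] ↥S₂) :
    IsAdmLocCP pn₁ pn₂ S₁ S₂ φ ↔
      ∃ ψ : ∀ l : Λ, ↥(S₁.map (π₁ l).toAlgHom.toLinearMap) →ₗ[ℂ]
          ↥(S₂.map (π₂ l).toAlgHom.toLinearMap),
        (∀ l : Λ, IsCstarCPmapOn (S₁.map (π₁ l).toAlgHom.toLinearMap)
          (S₂.map (π₂ l).toAlgHom.toLinearMap) (ψ l)) ∧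
        ∀ (l : Λ) (s : ↥S₁),
          ((ψ l ⟨(π₁ l) (s : A₁), Submodule.mem_map_of_mem s.2⟩ :
              ↥(S₂.map (π₂ l).toAlgHom.toLinearMap)) : B₂ l)
            = (π₂ l) ((φ s : ↥S₂) : A₂) := by
  classical
  have hker₁ : ∀ (l : Λ) (a : A₁), p₁ l a = 0 ↔ (π₁ l) a = 0 := by
    intro l a; rw [← hnorm₁ l a, norm_eq_zero]
  have hker₂ : ∀ (l : Λ) (a : A₂), p₂ l a = 0 ↔ (π₂ l) a = 0 := by
    intro l a; rw [← hnorm₂ l a, norm_eq_zero]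
  constructor
  · intro hφ
    -- congruence: φ descends along π₁, π₂
    have hcong : ∀ (l : Λ) (s t : ↥S₁), (π₁ l) (s : A₁) = (π₁ l) (t : A₁) →
        (π₂ l) ((φ s : ↥S₂) : A₂) = (π₂ l) ((φ t : ↥S₂) : A₂) := by
      intro l s t hst
      have h1 : p₁ l ((s : A₁) - t) = 0 :=
        (hker₁ l _).2 (by rw [map_sub, hst, sub_self])
      set M : Matrix (Fin 1) (Fin 1) ↥S₁ := fun _ _ => s - t with hM
      have hMval : M.map Subtype.val = fun _ _ => ((s : A₁) - t) := by
        ext i j; rw [Matrix.map_apply]; simp [hM]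
      have h2 : pn₁ l 1 (M.map Subtype.val) = 0 := by
        rw [hMval, (hpn₁ l).one]; exact h1
      have h3 := (hφ l 1 M).2 h2
      have h4 : (M.map fun s => ((φ s : ↥S₂) : A₂)) =
          fun _ _ => (((φ s : ↥S₂) : A₂) - ((φ t : ↥S₂) : A₂)) := by
        ext i j; rw [Matrix.map_apply]; simp [hM, map_sub]
      rw [h4, (hpn₂ l).one] at h3
      have h5 := (hker₂ l _).1 h3
      rwa [map_sub, sub_eq_zero] at h5
    -- a linear splitting of the restriction of π₁ to S₁
    have hsplit : ∀ l : Λ, ∃ σ : ↥(S₁.map (π₁ l).toAlgHom.toLinearMap) →ₗ[ℂ] ↥S₁,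
        ∀ b, (π₁ l) ((σ b : ↥S₁) : A₁) = (b : B₁ l) := by
      intro l
      let ρ : ↥S₁ →ₗ[ℂ] ↥(S₁.map (π₁ l).toAlgHom.toLinearMap) :=
        (((π₁ l).toAlgHom.toLinearMap).comp S₁.subtype).codRestrict _
          (fun s => Submodule.mem_map_of_mem s.2)
      have hρ : LinearMap.range ρ = ⊤ := by
        rw [LinearMap.range_eq_top]
        rintro ⟨b, hb⟩
        obtain ⟨s, hs, rfl⟩ := hb
        exact ⟨⟨s, hs⟩, rfl⟩
      obtain ⟨σ, hσ⟩ := ρ.exists_rightInverse_of_surjective hρ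
      refine ⟨σ, fun b => ?_⟩
      have := congrArg Subtype.val (LinearMap.congr_fun hσ b)
      simpa [ρ] using this
    choose σ hσ using hsplit
    -- the induced maps on the quotients
    let g : ∀ l : Λ, ↥S₁ →ₗ[ℂ] ↥(S₂.map (π₂ l).toAlgHom.toLinearMap) := fun l =>
      (((π₂ l).toAlgHom.toLinearMap).comp (S₂.subtype.comp φ)).codRestrict _
        (fun s => Submodule.mem_map_of_mem (φ s).2)
    have hgval : ∀ (l : Λ) (s : ↥S₁), ((g l s : ↥(S₂.map (π₂ l).toAlgHom.toLinearMap)) : B₂ l)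
        = (π₂ l) ((φ s : ↥S₂) : A₂) := fun l s => rfl
    refine ⟨fun l => (g l) ∘ₗ σ l, ?_, ?_⟩
    · -- complete positivity of each ψ l
      intro l n M hx
      obtain ⟨x, hx⟩ := hx
      -- lift the matrix and the square root
      set M' : Matrix (Fin n) (Fin n) ↥S₁ := M.map (σ l) with hM'
      choose x' hx' using fun i j => hsurj₁ l (x i j)
      set X : Matrix (Fin n) (Fin n) A₁ := Matrix.of x' with hX
      have hXmap : X.map (π₁ l) = x := by
        ext i j; simp [hX, Matrix.map_apply, hx']
      set c : Matrix (Fin n) (Fin n) A₁ := M'.map Subtype.val - star X * X with hc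
      have hc0 : pn₁ l n c = 0 := by
        rw [(hpn₁ l).ker]
        intro i j
        rw [hker₁]
        have e1 : (π₁ l) ((M'.map Subtype.val) i j) = (M.map Subtype.val) i j := by
          simp only [hM', Matrix.map_apply]
          rw [hσ l (M i j)]
        have e2 : (π₁ l) ((star X * X) i j) = (star x * x) i j := by
          rw [← hXmap]; exact mapStarMulAux (π₁ l) X i j
        simp only [hc, Matrix.sub_apply, map_sub, e1, e2, hx, sub_self]
      have hlam : LamPos (pn₁ l) n (M'.map Subtype.val) :=
        ⟨X, c, hc0, by rw [hc]; abel⟩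
      obtain ⟨y', c', hc', heq⟩ := (hφ l n M').1 hlam
      refine ⟨y'.map (π₂ l), ?_⟩
      have hc'0 : ∀ i j, (π₂ l) (c' i j) = 0 := fun i j =>
        (hker₂ l _).1 (((hpn₂ l).ker n c').1 hc' i j)
      ext i j
      have h6 : (π₂ l) ((M'.map fun s => ((φ s : ↥S₂) : A₂)) i j)
          = (π₂ l) (((star y' * y' + c') : Matrix (Fin n) (Fin n) A₂) i j) := by
        rw [heq]
      rw [Matrix.add_apply, map_add, hc'0, add_zero,
        mapStarMulAux (π₂ l) y' i j] at h6
      calc (M.map fun s => (((g l ∘ₗ σ l) s : ↥(S₂.map (π₂ l).toAlgHom.toLinearMap)) : B₂ l)) i j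
          = (π₂ l) ((M'.map fun s => ((φ s : ↥S₂) : A₂)) i j) := by
            simp [hM', Matrix.map_apply, hgval]
        _ = (star (y'.map (π₂ l)) * y'.map (π₂ l)) i j := h6
    · -- compatibility
      intro l s
      rw [LinearMap.comp_apply, hgval]
      exact hcong l _ s (hσ l ⟨(π₁ l) (s : A₁), Submodule.mem_map_of_mem s.2⟩)
  · rintro ⟨ψ, hψcp, hψcompat⟩ l n M
    constructor
    · rintro ⟨x, c, hc, hMx⟩
      set N : Matrix (Fin n) (Fin n) ↥(S₁.map (π₁ l).toAlgHom.toLinearMap) :=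
        Matrix.of (fun i j => ⟨(π₁ l) ((M i j : ↥S₁) : A₁),
          Submodule.mem_map_of_mem (M i j).2⟩) with hN
      have hc1 : ∀ i j, (π₁ l) (c i j) = 0 := fun i j =>
        (hker₁ l _).1 (((hpn₁ l).ker n c).1 hc i j)
      have hNval : N.map Subtype.val = star (x.map (π₁ l)) * (x.map (π₁ l)) := by
        ext i j
        have e0 : (π₁ l) ((M.map Subtype.val) i j)
            = (π₁ l) (((star x * x + c) : Matrix (Fin n) (Fin n) A₁) i j) := by rw [hMx]
        rw [Matrix.add_apply, map_add, hc1, add_zero, mapStarMulAux (π₁ l) x i j] at e0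
        simpa [hN, Matrix.map_apply] using e0
      obtain ⟨y, hy⟩ := hψcp l n N ⟨x.map (π₁ l), hNval⟩
      choose y' hy' using fun i j => hsurj₂ l (y i j)
      set Y : Matrix (Fin n) (Fin n) A₂ := Matrix.of y' with hY
      have hYmap : Y.map (π₂ l) = y := by
        ext i j; simp [hY, Matrix.map_apply, hy']
      set c₂ : Matrix (Fin n) (Fin n) A₂ :=
        (M.map fun s => ((φ s : ↥S₂) : A₂)) - star Y * Y with hc₂
      refine ⟨Y, c₂, ?_, by rw [hc₂]; abel⟩
      rw [(hpn₂ l).ker]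
      intro i j
      rw [hker₂]
      have e1 : (π₂ l) ((M.map fun s => ((φ s : ↥S₂) : A₂)) i j)
          = ((N.map fun s => ((ψ l s : ↥(S₂.map (π₂ l).toAlgHom.toLinearMap)) : B₂ l)) i j) := by
        simp only [Matrix.map_apply, hN, Matrix.of_apply]
        exact (hψcompat l (M i j)).symm
      have e2 : (π₂ l) ((star Y * Y) i j) = (star y * y) i j := by
        rw [← hYmap]; exact mapStarMulAux (π₂ l) Y i j
      simp only [hc₂, Matrix.sub_apply, map_sub, e1, e2, hy, sub_self]
    · intro h0
      rw [(hpn₂ l).ker]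
      intro i j
      rw [Matrix.map_apply, hker₂, ← hψcompat l (M i j)]
      have h1 : (π₁ l) ((M i j : ↥S₁) : A₁) = 0 :=
        (hker₁ l _).1 (((hpn₁ l).ker n _).1 h0 i j)
      have h2 : (⟨(π₁ l) ((M i j : ↥S₁) : A₁), Submodule.mem_map_of_mem (M i j).2⟩ :
          ↥(S₁.map (π₁ l).toAlgHom.toLinearMap)) = 0 := Subtype.ext h1
      rw [h2, map_zero]
      rfl
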